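/- Let S be a finitely generated profinite group (topologically generated by a finite set). Then every surjective continuous endomorphism of S is an automorphism (S is Hopfian). -/

import Mathlib

open Subgroup

section Aux

variable {G : Type*} [Group G] [TopologicalSpace G] [IsTopologicalGroup G]

/-- Two monoid homs with open kernels that agree on a set with dense closure agree. -/
lemma aux_hom_ext {M : Type*} [Group M] {F : Set G}
    (hd : Dense ((Subgroup.closure F : Subgroup G) : Set G))
    {ρ₁ ρ₂ : G →* M} (h1 : IsOpen (ρ₁.ker : Set G)) (h2 : IsOpen (ρ₂.ker : Set G))
    (hF : Set.EqOn ρ₁ ρ₂ F) : ρ₁ = ρ₂ := by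
  have hcl : ∀ x ∈ Subgroup.closure F, ρ₁ x = ρ₂ x := by
    have : Subgroup.closure F ≤ ρ₁.eqLocus ρ₂ := (Subgroup.closure_le _).2 hF
    exact fun x hx => this hx
  ext x
  have hopen : IsOpen ((fun y => x⁻¹ * y) ⁻¹' ((ρ₁.ker : Set G) ∩ ρ₂.ker)) :=
    (h1.inter h2).preimage (continuous_const.mul continuous_id)
  have hne : ((fun y => x⁻¹ * y) ⁻¹' ((ρ₁.ker : Set G) ∩ ρ₂.ker)).Nonempty :=
    ⟨x, by simp [Subgroup.one_mem]⟩
  obtain ⟨k, hk1, hk2⟩ := hd.inter_open_nonempty _ hopen hne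
  obtain ⟨hk3, hk4⟩ : x⁻¹ * k ∈ ρ₁.ker ∧ x⁻¹ * k ∈ ρ₂.ker := hk1
  have e1 : ρ₁ k = ρ₁ x := by
    have := MonoidHom.mem_ker.mp hk3
    have : ρ₁ x⁻¹ * ρ₁ k = 1 := by rw [← map_mul]; exact this
    calc ρ₁ k = ρ₁ x * (ρ₁ x⁻¹ * ρ₁ k) := by simp [← map_mul, mul_assoc]
    _ = ρ₁ x := by rw [this, mul_one]
  have e2 : ρ₂ k = ρ₂ x := by
    have := MonoidHom.mem_ker.mp hk4
    have : ρ₂ x⁻¹ * ρ₂ k = 1 := by rw [← map_mul]; exact this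
    calc ρ₂ k = ρ₂ x * (ρ₂ x⁻¹ * ρ₂ k) := by simp [← map_mul, mul_assoc]
    _ = ρ₂ x := by rw [this, mul_one]
  rw [← e1, ← e2]
  exact hcl k hk2

/-- permCongr as a MulEquiv. -/
noncomputable def permCongrMulEquiv {α β : Type*} (e : α ≃ β) :
    Equiv.Perm α ≃* Equiv.Perm β :=
  { e.permCongr with
    map_mul' := fun p q => by
      ext b
      simp [Equiv.permCongr_apply, Equiv.Perm.mul_apply] }

variable [CompactSpace G]

/-- The set of open normal subgroups of index `n` is finite. -/
lemma aux_finite {F : Set G}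
    (hd : Dense ((Subgroup.closure F : Subgroup G) : Set G)) (hFfin : F.Finite) (n : ℕ) :
    {N : Subgroup G | N.Normal ∧ IsOpen (N : Set G) ∧ N.index = n}.Finite := by
  classical
  set S := {N : Subgroup G | N.Normal ∧ IsOpen (N : Set G) ∧ N.index = n} with hS
  -- to each N in S associate a hom to Perm (Fin n) with kernel N
  have key : ∀ N ∈ S, ∃ ρ : G →* Equiv.Perm (Fin n), ρ.ker = N := by
    intro N hN
    obtain ⟨hnorm, hopen, hidx⟩ := hN
    have hfin : Finite (G ⧸ N) := N.quotient_finite_of_isOpen hopen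
    have hcard : Nat.card (G ⧸ N) = n := by rw [← hidx]; rfl
    have hne : Nat.card (G ⧸ N) ≠ 0 := by
      rw [hcard, ← hidx]; exact Subgroup.index_ne_zero_of_finite
    let e : (G ⧸ N) ≃ Fin n := (Nat.equivFinOfCardPos hne).trans (finCongr hcard)
    refine ⟨(permCongrMulEquiv e).toMonoidHom.comp (MulAction.toPermHom G (G ⧸ N)), ?_⟩
    have : ((permCongrMulEquiv e).toMonoidHom.comp (MulAction.toPermHom G (G ⧸ N))).ker
        = (MulAction.toPermHom G (G ⧸ N)).ker := by
      rw [← MonoidHom.comap_ker]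
      have : (permCongrMulEquiv e).toMonoidHom.ker = ⊥ :=
        (permCongrMulEquiv e).toMonoidHom.ker_eq_bot_iff.mpr (permCongrMulEquiv e).injective
      rw [this, MonoidHom.comap_bot]
    rw [this, ← Subgroup.normalCore_eq_ker]
    haveI := hnorm
    exact N.normalCore_eq_self
  choose ρ hρ using key
  -- the map N ↦ ρ N restricted to F is injective
  have hFfin' : Finite F := hFfin
  have : Finite (F → Equiv.Perm (Fin n)) := by infer_instance
  apply Set.Finite.of_finite_image (f := fun N => if h : N ∈ S then (fun x : F => ρ N h x) else fun _ => 1)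
  · exact Set.Finite.subset (Set.finite_univ) (Set.subset_univ _)
  · intro N₁ h₁ N₂ h₂ heq
    simp only [dif_pos h₁, dif_pos h₂] at heq
    have : ρ N₁ h₁ = ρ N₂ h₂ := by
      apply aux_hom_ext hd
      · rw [hρ N₁ h₁]; exact h₁.2.1
      · rw [hρ N₂ h₂]; exact h₂.2.1
      · intro x hx
        exact congrFun heq ⟨x, hx⟩
    rw [← hρ N₁ h₁, ← hρ N₂ h₂, this]

end Aux

/-- A topologically finitely generated profinite group is Hopfian: every
surjective continuous endomorphism is a (topological) automorphism. -/
theorem profinite_group_hopfian {G : Type*} [Group G] [TopologicalSpace G]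
    [CompactSpace G] [T2Space G] [TotallyDisconnectedSpace G] [IsTopologicalGroup G]
    (hfg : ∃ F : Finset G, Dense ((Subgroup.closure (F : Set G) : Subgroup G) : Set G))
    (φ : G →* G) (hφc : Continuous φ) (hφs : Function.Surjective φ) :
    ∃ e : G ≃* G, (⇑e = ⇑φ) ∧ Continuous e ∧ Continuous e.symm := by
  classical
  obtain ⟨F, hd⟩ := hfg
  -- ker φ is contained in every open normal subgroup
  have hker : ∀ N : Subgroup G, N.Normal → IsOpen (N : Set G) → φ.ker ≤ N := by
    intro N hnorm hopen
    have hfin : Finite (G ⧸ N) := N.quotient_finite_of_isOpen hopen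
    set n := N.index with hn
    set S := {N : Subgroup G | N.Normal ∧ IsOpen (N : Set G) ∧ N.index = n} with hS
    have hNS : N ∈ S := ⟨hnorm, hopen, rfl⟩
    have hSfin : S.Finite := aux_finite hd (F.finite_toSet) n
    have hmaps : Set.MapsTo (fun M : Subgroup G => M.comap φ) S S := by
      rintro M ⟨hMn, hMo, hMi⟩
      exact ⟨hMn.comap φ, hMo.preimage hφc, by rw [M.index_comap_of_surjective hφs]; exact hMi⟩
    have hinj : Set.InjOn (fun M : Subgroup G => M.comap φ) S :=
      fun M₁ _ M₂ _ h => Subgroup.comap_injective hφs h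
    have hbij := (hSfin.injOn_iff_bijOn_of_mapsTo hmaps).mp hinj
    obtain ⟨M, hM, hMeq⟩ := hbij.surjOn hNS
    have : φ.ker ≤ M.comap φ := by
      rw [← MonoidHom.comap_bot]
      exact Subgroup.comap_mono bot_le
    exact hMeq ▸ this
  -- intersection of open normal subgroups is trivial
  have hinj : Function.Injective φ := by
    rw [← MonoidHom.ker_eq_bot_iff, eq_bot_iff]
    intro x hx
    simp only [Subgroup.mem_bot]
    by_contra hx1
    have hU : IsOpen ({x}ᶜ : Set G) := isOpen_compl_singleton
    have h1U : (1 : G) ∈ ({x}ᶜ : Set G) := by simp [Ne.symm hx1]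
    obtain ⟨V, hV, h1V, hVU⟩ := compact_exists_isClopen_in_isOpen hU h1U
    obtain ⟨H, hH⟩ := IsTopologicalGroup.exist_openNormalSubgroup_sub_clopen_nhds_of_one hV h1V
    have : x ∈ H.toSubgroup := hker H.toSubgroup H.isNormal' H.isOpen' hx
    exact hVU (hH this) rfl
  refine ⟨MulEquiv.ofBijective φ ⟨hinj, hφs⟩, rfl, hφc, ?_⟩
  exact (Continuous.homeoOfEquivCompactToT2
    (f := (MulEquiv.ofBijective φ ⟨hinj, hφs⟩).toEquiv) hφc).symm.continuous
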